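/- With V, g, P, π, ω, Ric, Ric⁰ and r, r⁰ as in the pointwise model, the manifold is of Einstein type of the zeroth kind if and only if it is quasi-Einstein with Ricci tensor Ric = (1/(4n))·(4r − (n−1)·π(P))·g + ((n−1)/4)·(π⊗π); that is, Ric⁰ = (r⁰/n)·g holds if and only if Ric = (1/(4n))·(4r − (n−1)·π(P))·g + ((n−1)/4)·(π⊗π). -/

import Mathlib

/-- The `g`-trace of a bilinear form `B`: the trace of the endomorphism
`(g♭)⁻¹ ∘ B♭` of `V`, where `B♭ : V → V*` is `X ↦ B(X,·)`. -/
noncomputable def trG {V : Type*} [AddCommGroup V] [Module ℝ V] [FiniteDimensional ℝ V]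
    (g : LinearMap.BilinForm ℝ V) (hg : g.Nondegenerate)
    (B : LinearMap.BilinForm ℝ V) : ℝ :=
  LinearMap.trace ℝ V ((g.toDual hg).symm.toLinearMap ∘ₗ B)

lemma trG_smul {V : Type*} [AddCommGroup V] [Module ℝ V] [FiniteDimensional ℝ V]
    (g : LinearMap.BilinForm ℝ V) (hg : g.Nondegenerate)
    (a : ℝ) (B : LinearMap.BilinForm ℝ V) :
    trG g hg (a • B) = a * trG g hg B := by
  simp [trG, LinearMap.comp_smul]

lemma trG_sub {V : Type*} [AddCommGroup V] [Module ℝ V] [FiniteDimensional ℝ V]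
    (g : LinearMap.BilinForm ℝ V) (hg : g.Nondegenerate)
    (B C : LinearMap.BilinForm ℝ V) :
    trG g hg (B - C) = trG g hg B - trG g hg C := by
  simp [trG, LinearMap.comp_sub]

lemma trG_self {V : Type*} [AddCommGroup V] [Module ℝ V] [FiniteDimensional ℝ V]
    (g : LinearMap.BilinForm ℝ V) (hg : g.Nondegenerate) :
    trG g hg g = (Module.finrank ℝ V : ℝ) := by
  have h : (g.toDual hg).symm.toLinearMap ∘ₗ g = LinearMap.id := by
    ext x
    exact (g.toDual hg).symm_apply_apply x
  rw [trG, h, LinearMap.trace_id]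

lemma toDual_symm_eq {V : Type*} [AddCommGroup V] [Module ℝ V] [FiniteDimensional ℝ V]
    (g : LinearMap.BilinForm ℝ V) (hg : g.Nondegenerate) (hgs : g.IsSymm) (P : V) :
    (g.toDual hg).symm (g.flip P) = P := by
  apply (g.toDual hg).injective
  rw [LinearEquiv.apply_symm_apply]
  ext y
  simpa [LinearMap.BilinForm.toDual_def] using hgs.eq y P

lemma trG_pipi {V : Type*} [AddCommGroup V] [Module ℝ V] [FiniteDimensional ℝ V]
    (g : LinearMap.BilinForm ℝ V) (hg : g.Nondegenerate) (hgs : g.IsSymm)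
    (P : V) (π : V →ₗ[ℝ] ℝ) (hπ : π = g.flip P) :
    trG g hg (π.smulRight π) = π P := by
  have h : (g.toDual hg).symm.toLinearMap ∘ₗ π.smulRight π
      = dualTensorHom ℝ V V (π ⊗ₜ P) := by
    ext x
    simp only [LinearMap.comp_apply, LinearMap.coe_comp, LinearEquiv.coe_coe,
      LinearMap.smulRight_apply, Function.comp_apply, dualTensorHom_apply]
    rw [map_smul, hπ, toDual_symm_eq g hg hgs P]
  rw [trG, h, LinearMap.trace_eq_contract_apply]
  simp

theorem stmt_4 {V : Type*} [AddCommGroup V] [Module ℝ V] [FiniteDimensional ℝ V]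
    (n : ℕ) (hn : 3 ≤ n) (hdim : Module.finrank ℝ V = n)
    (g : LinearMap.BilinForm ℝ V) (hg : g.Nondegenerate) (hgs : g.IsSymm)
    (P : V) (π : V →ₗ[ℝ] ℝ) (hπ : π = g.flip P) (ω : ℝ)
    (ππ : LinearMap.BilinForm ℝ V) (hππ : ππ = π.smulRight π)
    (Ric : LinearMap.BilinForm ℝ V) (hRicSymm : Ric.IsSymm)
    (Ric0 : LinearMap.BilinForm ℝ V)
    (hRic0 : Ric0 = Ric - ((((n : ℝ) - 1) / 2) * (3 * ω + π P)) • g - (((n : ℝ) - 1) / 4) • ππ) :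
    Ric0 = (trG g hg Ric0 / (n : ℝ)) • g ↔
      Ric = ((1 / (4 * (n : ℝ))) * (4 * trG g hg Ric - ((n : ℝ) - 1) * π P)) • g
        + (((n : ℝ) - 1) / 4) • ππ := by
  have hn0 : (n : ℝ) ≠ 0 := by positivity
  set r := trG g hg Ric with hr
  set p := π P with hp
  have hππ' : trG g hg ππ = p := by rw [hππ]; exact trG_pipi g hg hgs P π hπ
  have hgtr : trG g hg g = (n : ℝ) := by rw [trG_self, hdim]
  have hr0 : trG g hg Ric0
      = r - ((((n : ℝ) - 1) / 2) * (3 * ω + p)) * (n : ℝ) - (((n : ℝ) - 1) / 4) * p := by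
    rw [hRic0, trG_sub, trG_sub, trG_smul, trG_smul, hgtr, hππ']
  have hcoef : trG g hg Ric0 / (n : ℝ)
      = (1 / (4 * (n : ℝ))) * (4 * r - ((n : ℝ) - 1) * p)
        - (((n : ℝ) - 1) / 2) * (3 * ω + p) := by
    rw [hr0]; field_simp; ring
  rw [hcoef, hRic0]
  constructor <;> intro h <;>
  · rw [← sub_eq_zero] at h ⊢
    rw [← h]
    module
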